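/- Let n ≥ 1, let Λ and P be n×n real diagonal matrices with strictly positive diagonal entries, let μ > 0, T > 0, and let X : [0,1]×[0,T] → ℝⁿ be continuously differentiable and satisfy the transport equation ∂ₜX(z,t) + Λ ∂_zX(z,t) = 0 for all (z,t) ∈ [0,1]×[0,T]. Then the function V₁(t) := ∫₀¹ X(z,t)ᵀ P X(z,t) e^{−μz} dz is differentiable on (0,T) and satisfies, for all t ∈ (0,T): V₁′(t) ≤ −μ λ_min(Λ) V₁(t) − e^{−μ} X(1,t)ᵀ P Λ X(1,t) + X(0,t)ᵀ P Λ X(0,t), where λ_min(Λ) denotes the smallest diagonal entry of Λ. -/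

import Mathlib

open Matrix Set Real MeasureTheory

lemma diag_dot {n : ℕ} (d x y : Fin n → ℝ) :
    x ⬝ᵥ (Matrix.diagonal d).mulVec y = ∑ i, d i * (x i * y i) := by
  simp only [dotProduct, Matrix.mulVec_diagonal]
  exact Finset.sum_congr rfl fun i _ => by ring

set_option maxHeartbeats 1600000 in
/-- dissipation estimate for `V₁` in Section 4.3 of the paper.
For a C¹ solution of the transport equation `∂ₜX + Λ ∂_z X = 0` on `[0,1] × [0,T]` and
diagonal positive `Λ`, `P`, the functional `V₁(t) = ∫₀¹ Xᵀ P X e^{-μ z} dz` is differentiable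
on `(0,T)` with `V₁' ≤ -μ λ_min(Λ) V₁ - e^{-μ} X(1)ᵀ P Λ X(1) + X(0)ᵀ P Λ X(0)`. -/
theorem stmt_5 (n : ℕ) (hn : 1 ≤ n)
    (lvec pvec : Fin n → ℝ) (hl : ∀ i, 0 < lvec i) (hp : ∀ i, 0 < pvec i)
    (Λ P : Matrix (Fin n) (Fin n) ℝ) (hΛ : Λ = Matrix.diagonal lvec)
    (hP : P = Matrix.diagonal pvec)
    (μ T : ℝ) (hμ : 0 < μ) (hT : 0 < T)
    (X Xz Xt : ℝ → ℝ → (Fin n → ℝ))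
    (hXz : ∀ z ∈ Set.Icc (0:ℝ) 1, ∀ t ∈ Set.Icc (0:ℝ) T,
      HasDerivWithinAt (fun ζ => X ζ t) (Xz z t) (Set.Icc (0:ℝ) 1) z)
    (hXt : ∀ z ∈ Set.Icc (0:ℝ) 1, ∀ t ∈ Set.Icc (0:ℝ) T,
      HasDerivWithinAt (fun τ => X z τ) (Xt z t) (Set.Icc (0:ℝ) T) t)
    (hXcont : ContinuousOn (fun p : ℝ × ℝ => X p.1 p.2) (Set.Icc 0 1 ×ˢ Set.Icc 0 T))
    (hXzcont : ContinuousOn (fun p : ℝ × ℝ => Xz p.1 p.2) (Set.Icc 0 1 ×ˢ Set.Icc 0 T))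
    (hXtcont : ContinuousOn (fun p : ℝ × ℝ => Xt p.1 p.2) (Set.Icc 0 1 ×ˢ Set.Icc 0 T))
    (hpde : ∀ z ∈ Set.Icc (0:ℝ) 1, ∀ t ∈ Set.Icc (0:ℝ) T,
      Xt z t + Λ.mulVec (Xz z t) = 0) :
    ∀ t ∈ Set.Ioo (0:ℝ) T, ∃ v : ℝ,
      HasDerivAt (fun τ => ∫ z in (0:ℝ)..1, (X z τ ⬝ᵥ P.mulVec (X z τ)) * Real.exp (-μ * z)) v t ∧
      v ≤ -μ * (⨅ i, lvec i) *
            (∫ z in (0:ℝ)..1, (X z t ⬝ᵥ P.mulVec (X z t)) * Real.exp (-μ * z)) -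
          Real.exp (-μ) * (X 1 t ⬝ᵥ (P * Λ).mulVec (X 1 t)) +
          X 0 t ⬝ᵥ (P * Λ).mulVec (X 0 t) := by
  intro t ht
  have ht' : t ∈ Icc (0:ℝ) T := ⟨ht.1.le, ht.2.le⟩
  have h01 : (0:ℝ) ≤ 1 := zero_le_one
  have huIcc : uIcc (0:ℝ) 1 = Icc 0 1 := uIcc_of_le h01
  have huIoc : uIoc (0:ℝ) 1 = Ioc 0 1 := uIoc_of_le h01
  have hK : IsCompact (Icc (0:ℝ) 1 ×ˢ Icc (0:ℝ) T) := isCompact_Icc.prod isCompact_Icc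
  -- component continuity (2D)
  have hXc : ∀ i, ContinuousOn (fun p : ℝ × ℝ => X p.1 p.2 i) (Icc 0 1 ×ˢ Icc 0 T) :=
    fun i => (continuous_apply i).comp_continuousOn hXcont
  have hXzc : ∀ i, ContinuousOn (fun p : ℝ × ℝ => Xz p.1 p.2 i) (Icc 0 1 ×ˢ Icc 0 T) :=
    fun i => (continuous_apply i).comp_continuousOn hXzcont
  have hXtc : ∀ i, ContinuousOn (fun p : ℝ × ℝ => Xt p.1 p.2 i) (Icc 0 1 ×ˢ Icc 0 T) :=
    fun i => (continuous_apply i).comp_continuousOn hXtcont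
  have hmapsTo : ∀ τ ∈ Icc (0:ℝ) T,
      MapsTo (fun z : ℝ => ((z, τ) : ℝ × ℝ)) (Icc 0 1) (Icc 0 1 ×ˢ Icc 0 T) :=
    fun τ hτ z hz => ⟨hz, hτ⟩
  have hXslice : ∀ i, ∀ τ ∈ Icc (0:ℝ) T, ContinuousOn (fun z => X z τ i) (Icc 0 1) :=
    fun i τ hτ =>
      (hXc i).comp (continuous_id.prodMk continuous_const).continuousOn (hmapsTo τ hτ)
  have hXzslice : ∀ i, ∀ τ ∈ Icc (0:ℝ) T, ContinuousOn (fun z => Xz z τ i) (Icc 0 1) :=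
    fun i τ hτ =>
      (hXzc i).comp (continuous_id.prodMk continuous_const).continuousOn (hmapsTo τ hτ)
  have hexpc : Continuous fun z : ℝ => Real.exp (-μ * z) :=
    Real.continuous_exp.comp (continuous_const.mul continuous_id)
  have hII : ∀ f : ℝ → ℝ, ContinuousOn f (Icc 0 1) → IntervalIntegrable f volume 0 1 :=
    fun f hf => ContinuousOn.intervalIntegrable (huIcc ▸ hf)
  -- the integrand and its t-derivative
  set F : ℝ → ℝ → ℝ :=
    fun τ z => (∑ i, pvec i * (X z τ i * X z τ i)) * Real.exp (-μ * z) with hFdef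
  set F' : ℝ → ℝ → ℝ :=
    fun τ z => (∑ i, pvec i * (Xt z τ i * X z τ i + X z τ i * Xt z τ i)) * Real.exp (-μ * z)
    with hF'def
  have hcontF2 : ContinuousOn (fun p : ℝ × ℝ => F p.2 p.1) (Icc 0 1 ×ˢ Icc 0 T) := by
    rw [hFdef]
    exact (continuousOn_finset_sum _ fun i _ =>
      continuousOn_const.mul ((hXc i).mul (hXc i))).mul
      (hexpc.comp continuous_fst).continuousOn
  have hcontF'2 : ContinuousOn (fun p : ℝ × ℝ => F' p.2 p.1) (Icc 0 1 ×ˢ Icc 0 T) := by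
    rw [hF'def]
    exact (continuousOn_finset_sum _ fun i _ =>
      continuousOn_const.mul (((hXtc i).mul (hXc i)).add ((hXc i).mul (hXtc i)))).mul
      (hexpc.comp continuous_fst).continuousOn
  have hcontF : ∀ τ ∈ Icc (0:ℝ) T, ContinuousOn (F τ) (Icc 0 1) :=
    fun τ hτ =>
      hcontF2.comp (continuous_id.prodMk continuous_const).continuousOn (hmapsTo τ hτ)
  have hcontF' : ∀ τ ∈ Icc (0:ℝ) T, ContinuousOn (F' τ) (Icc 0 1) :=
    fun τ hτ =>
      hcontF'2.comp (continuous_id.prodMk continuous_const).continuousOn (hmapsTo τ hτ)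
  obtain ⟨C, hC⟩ := hK.exists_bound_of_continuousOn hcontF'2
  -- radius
  set ε : ℝ := min t (T - t) with hεdef
  have hε : 0 < ε := lt_min ht.1 (sub_pos.mpr ht.2)
  have hball : Metric.ball t ε ⊆ Ioo (0:ℝ) T := by
    intro τ hτ
    rw [Real.ball_eq_Ioo] at hτ
    constructor
    · have : 0 ≤ t - ε := by
        have := min_le_left t (T - t); rw [hεdef]; linarith [min_le_left t (T - t)]
      linarith [hτ.1]
    · have : t + ε ≤ T := by
        have := min_le_right t (T - t); rw [hεdef]; linarith [min_le_right t (T - t)]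
      linarith [hτ.2]
  -- differentiability in τ
  have hderivF : ∀ z ∈ Icc (0:ℝ) 1, ∀ τ ∈ Ioo (0:ℝ) T,
      HasDerivAt (fun σ => F σ z) (F' τ z) τ := by
    intro z hz τ hτ
    have hXd : HasDerivAt (fun σ => X z σ) (Xt z τ) τ :=
      (hXt z hz τ ⟨hτ.1.le, hτ.2.le⟩).hasDerivAt (Icc_mem_nhds hτ.1 hτ.2)
    have hXdi := hasDerivAt_pi.mp hXd
    have hsum : HasDerivAt (fun σ => ∑ i, pvec i * (X z σ i * X z σ i))
        (∑ i, pvec i * (Xt z τ i * X z τ i + X z τ i * Xt z τ i)) τ :=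
      HasDerivAt.fun_sum fun i _ => ((hXdi i).mul (hXdi i)).const_mul _
    exact hsum.mul_const _
  -- differentiate under the integral sign
  obtain ⟨hF'int, hderiv⟩ :=
    intervalIntegral.hasDerivAt_integral_of_dominated_loc_of_deriv_le (μ := volume)
      (F := F) (F' := F') (bound := fun _ => C) (a := 0) (b := 1) (Metric.ball_mem_nhds t hε)
      (Filter.eventually_of_mem (Icc_mem_nhds ht.1 ht.2) fun τ hτ =>
        ((hcontF τ hτ).mono (by rw [huIoc]; exact Ioc_subset_Icc_self)).aestronglyMeasurable
          measurableSet_uIoc)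
      (hII _ (hcontF t ht'))
      (((hcontF' t ht').mono (by rw [huIoc]; exact Ioc_subset_Icc_self)).aestronglyMeasurable
        measurableSet_uIoc)
      (ae_of_all _ fun z hz τ hτ => by
        have hz' : z ∈ Icc (0:ℝ) 1 := Ioc_subset_Icc_self (huIoc ▸ hz)
        exact hC (z, τ) ⟨hz', ⟨(hball hτ).1.le, (hball hτ).2.le⟩⟩)
      intervalIntegrable_const
      (ae_of_all _ fun z hz τ hτ =>
        hderivF z (Ioc_subset_Icc_self (huIoc ▸ hz)) τ (hball hτ))
  refine ⟨∫ z in (0:ℝ)..1, F' t z, ?_, ?_⟩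
  · have heq : (fun τ => ∫ z in (0:ℝ)..1, (X z τ ⬝ᵥ P.mulVec (X z τ)) * Real.exp (-μ * z))
        = fun τ => ∫ z in (0:ℝ)..1, F τ z := by
      funext τ
      refine intervalIntegral.integral_congr fun z _ => ?_
      rw [hFdef, hP, diag_dot]
    rw [heq]
    exact hderiv
  -- now the estimate
  · set bfun : ℝ → ℝ := fun z => ∑ i, pvec i * lvec i * (X z t i * X z t i) with hbdef
    set afun : ℝ → ℝ := fun z => ∑ i, pvec i * (X z t i * X z t i) with hadef
    set g : ℝ → ℝ := fun z => bfun z * Real.exp (-μ * z) with hgdef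
    set gd : ℝ → ℝ := fun z =>
      (∑ i, pvec i * lvec i * (Xz z t i * X z t i + X z t i * Xz z t i)) * Real.exp (-μ * z)
        + (∑ i, pvec i * lvec i * (X z t i * X z t i)) * (-μ * Real.exp (-μ * z)) with hgddef
    have hexp : ∀ z : ℝ, HasDerivAt (fun z => Real.exp (-μ * z)) (-μ * Real.exp (-μ * z)) z := by
      intro z
      have h := ((hasDerivAt_id z).const_mul (-μ)).exp
      convert h using 1
      simp only [id_eq, mul_one]
      ring_nf
      rfl
    have hg : ∀ z ∈ Ioo (0:ℝ) 1, HasDerivAt g (gd z) z := by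
      intro z hz
      have hXd : HasDerivAt (fun ζ => X ζ t) (Xz z t) z :=
        (hXz z ⟨hz.1.le, hz.2.le⟩ t ht').hasDerivAt (Icc_mem_nhds hz.1 hz.2)
      have hXdi := hasDerivAt_pi.mp hXd
      rw [hgdef, hbdef, hgddef]
      exact (HasDerivAt.fun_sum fun i _ => ((hXdi i).mul (hXdi i)).const_mul _).mul (hexp z)
    have hbc : ContinuousOn bfun (Icc 0 1) := by
      rw [hbdef]
      exact continuousOn_finset_sum _ fun i _ =>
        continuousOn_const.mul ((hXslice i t ht').mul (hXslice i t ht'))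
    have hac : ContinuousOn afun (Icc 0 1) := by
      rw [hadef]
      exact continuousOn_finset_sum _ fun i _ =>
        continuousOn_const.mul ((hXslice i t ht').mul (hXslice i t ht'))
    have hgc : ContinuousOn g (Icc 0 1) := by
      rw [hgdef]; exact hbc.mul hexpc.continuousOn
    have hgdc : ContinuousOn gd (Icc 0 1) := by
      rw [hgddef]
      refine ContinuousOn.add ?_ ?_
      · exact (continuousOn_finset_sum _ fun i _ => continuousOn_const.mul
          (((hXzslice i t ht').mul (hXslice i t ht')).add
            ((hXslice i t ht').mul (hXzslice i t ht')))).mul hexpc.continuousOn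
      · exact (continuousOn_finset_sum _ fun i _ => continuousOn_const.mul
          ((hXslice i t ht').mul (hXslice i t ht'))).mul
          (continuous_const.mul hexpc).continuousOn
    have hgdint : IntervalIntegrable gd volume 0 1 := hII _ hgdc
    have hbeint : IntervalIntegrable (fun z => bfun z * Real.exp (-μ * z)) volume 0 1 :=
      hII _ (hbc.mul hexpc.continuousOn)
    have haeint : IntervalIntegrable (fun z => afun z * Real.exp (-μ * z)) volume 0 1 :=
      hII _ (hac.mul hexpc.continuousOn)
    have hftc : ∫ z in (0:ℝ)..1, gd z = g 1 - g 0 :=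
      intervalIntegral.integral_eq_sub_of_hasDeriv_right_of_le h01 hgc
        (fun z hz => (hg z hz).hasDerivWithinAt) hgdint
    -- rewrite F' t via the PDE
    have hpt : ∀ z ∈ Icc (0:ℝ) 1,
        F' t z = -gd z - μ * (bfun z * Real.exp (-μ * z)) := by
      intro z hz
      have hXteq : ∀ i, Xt z t i = -(lvec i * Xz z t i) := by
        intro i
        have h := congrFun (hpde z hz t ht') i
        simp only [hΛ, Pi.add_apply, Matrix.mulVec_diagonal, Pi.zero_apply] at h
        linarith
      have hsum : (∑ i, pvec i * (Xt z t i * X z t i + X z t i * Xt z t i))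
          = -∑ i, pvec i * lvec i * (Xz z t i * X z t i + X z t i * Xz z t i) := by
        rw [← Finset.sum_neg_distrib]
        exact Finset.sum_congr rfl fun i _ => by rw [hXteq i]; ring
      rw [hF'def]
      simp only
      rw [hsum, hgddef, hbdef]
      simp only
      ring
    have hcongr : (∫ z in (0:ℝ)..1, F' t z)
        = ∫ z in (0:ℝ)..1, (-gd z - μ * (bfun z * Real.exp (-μ * z))) := by
      refine intervalIntegral.integral_congr fun z hz => ?_
      exact hpt z (huIcc ▸ hz)
    have hsplit : (∫ z in (0:ℝ)..1, (-gd z - μ * (bfun z * Real.exp (-μ * z))))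
        = -(g 1 - g 0) - μ * ∫ z in (0:ℝ)..1, bfun z * Real.exp (-μ * z) := by
      have hgdnint : IntervalIntegrable (fun z => -gd z) volume 0 1 := hgdint.neg
      have hmbe : IntervalIntegrable (fun z => μ * (bfun z * Real.exp (-μ * z))) volume 0 1 :=
        hbeint.const_mul μ
      rw [intervalIntegral.integral_sub hgdnint hmbe,
        intervalIntegral.integral_neg, hftc, intervalIntegral.integral_const_mul]
    -- comparison of integrals
    set m : ℝ := ⨅ i, lvec i with hmdef
    have hmle : ∀ i, m ≤ lvec i := fun i => ciInf_le (Set.Finite.bddBelow (finite_range _)) i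
    have hmono : m * (∫ z in (0:ℝ)..1, afun z * Real.exp (-μ * z))
        ≤ ∫ z in (0:ℝ)..1, bfun z * Real.exp (-μ * z) := by
      rw [← intervalIntegral.integral_const_mul]
      refine intervalIntegral.integral_mono_on h01 (haeint.const_mul m) hbeint fun z hz => ?_
      have hab : m * afun z ≤ bfun z := by
        rw [hadef, hbdef]
        simp only
        rw [Finset.mul_sum]
        refine Finset.sum_le_sum fun i _ => ?_
        have h1 : m * (pvec i * (X z t i * X z t i)) ≤ lvec i * (pvec i * (X z t i * X z t i)) :=
          mul_le_mul_of_nonneg_right (hmle i)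
            (mul_nonneg (hp i).le (mul_self_nonneg _))
        calc m * (pvec i * (X z t i * X z t i))
            ≤ lvec i * (pvec i * (X z t i * X z t i)) := h1
          _ = pvec i * lvec i * (X z t i * X z t i) := by ring
      calc m * (afun z * Real.exp (-μ * z)) = (m * afun z) * Real.exp (-μ * z) := by ring
        _ ≤ bfun z * Real.exp (-μ * z) :=
            mul_le_mul_of_nonneg_right hab (Real.exp_nonneg _)
    -- final assembly
    have hgoalrw : -μ * m *
          (∫ z in (0:ℝ)..1, (X z t ⬝ᵥ P.mulVec (X z t)) * Real.exp (-μ * z)) -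
          Real.exp (-μ) * (X 1 t ⬝ᵥ (P * Λ).mulVec (X 1 t)) +
          X 0 t ⬝ᵥ (P * Λ).mulVec (X 0 t)
        = -μ * m * (∫ z in (0:ℝ)..1, afun z * Real.exp (-μ * z))
          - Real.exp (-μ) * bfun 1 + bfun 0 := by
      rw [hP, hΛ, Matrix.diagonal_mul_diagonal]
      rw [hadef, hbdef]
      simp only [diag_dot, Pi.mul_apply]
    rw [hcongr, hsplit, hgoalrw]
    have hg1 : g 1 = Real.exp (-μ) * bfun 1 := by
      rw [hgdef]; simp only; rw [mul_comm]; norm_num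
    have hg0 : g 0 = bfun 0 := by
      rw [hgdef]; simp only; norm_num
    rw [hg1, hg0]
    have hmul : μ * (m * (∫ z in (0:ℝ)..1, afun z * Real.exp (-μ * z)))
        ≤ μ * ∫ z in (0:ℝ)..1, bfun z * Real.exp (-μ * z) :=
      mul_le_mul_of_nonneg_left hmono hμ.le
    nlinarith [hmul]
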